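/- For all integers k ≥ 1 and r ≥ k+1 there exists a k-arc-connected digraph D on (2k+1)r vertices such that every spanning k-arc-connected subdigraph of D has chromatic number at least 2k+1. -/

import Mathlib

/-- `k`-arc-connectivity: every nonempty proper vertex set has out-degree at least `k`. -/
def IsKArcConnected {V : Type*} (D : V → V → Prop) (k : ℕ) : Prop :=
  ∀ X : Set V, X.Nonempty → X ≠ Set.univ →
    k ≤ {p : V × V | D p.1 p.2 ∧ p.1 ∈ X ∧ p.2 ∉ X}.ncard

namespace Stmt16Aux

/-- cyclic difference in `Fin (2k+1)` -/
def cdiff (k : ℕ) (a b : Fin (2 * k + 1)) : ℕ :=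
  if a.val ≤ b.val then b.val - a.val else b.val + (2 * k + 1) - a.val

/-- rotative tournament -/
def Rot (k : ℕ) (a b : Fin (2 * k + 1)) : Prop :=
  1 ≤ cdiff k a b ∧ cdiff k a b ≤ k

instance (k : ℕ) (a b : Fin (2 * k + 1)) : Decidable (Rot k a b) := by
  unfold Rot; infer_instance

lemma cdiff_self (k : ℕ) (a : Fin (2 * k + 1)) : cdiff k a a = 0 := by simp [cdiff]

lemma rot_irrefl (k : ℕ) (a : Fin (2 * k + 1)) : ¬ Rot k a a := by
  simp [Rot, cdiff_self]

lemma cdiff_add (k : ℕ) (a b : Fin (2 * k + 1)) (h : a ≠ b) :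
    cdiff k a b + cdiff k b a = 2 * k + 1 := by
  have ha := a.isLt; have hb := b.isLt
  have hne : a.val ≠ b.val := fun hv => h (Fin.ext hv)
  simp only [cdiff]; split_ifs <;> omega

lemma cdiff_lt (k : ℕ) (a b : Fin (2 * k + 1)) : cdiff k a b < 2 * k + 1 := by
  have ha := a.isLt; have hb := b.isLt
  simp only [cdiff]; split_ifs <;> omega

lemma cdiff_eq_zero (k : ℕ) (a b : Fin (2 * k + 1)) (h : cdiff k a b = 0) : a = b := by
  have ha := a.isLt; have hb := b.isLt
  apply Fin.ext
  simp only [cdiff] at h; split_ifs at h <;> omega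

lemma rot_total (k : ℕ) (a b : Fin (2 * k + 1)) (h : a ≠ b) :
    (Rot k a b ∧ ¬ Rot k b a) ∨ (Rot k b a ∧ ¬ Rot k a b) := by
  have h1 := cdiff_add k a b h
  have h2 : cdiff k a b ≠ 0 := fun hz => h (cdiff_eq_zero k a b hz)
  have h3 : cdiff k b a ≠ 0 := fun hz => h.symm (cdiff_eq_zero k b a hz)
  by_cases hle : cdiff k a b ≤ k
  · exact Or.inl ⟨⟨by omega, hle⟩, fun hc => by have := hc.2; omega⟩
  · exact Or.inr ⟨⟨by omega, by omega⟩, fun hc => by have := hc.2; omega⟩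

lemma cdiff_inj (k : ℕ) (a b c : Fin (2 * k + 1)) (h : cdiff k a b = cdiff k a c) : b = c := by
  have ha := a.isLt; have hb := b.isLt; have hc := c.isLt
  apply Fin.ext
  simp only [cdiff] at h; split_ifs at h <;> omega

lemma cdiff_surj (k : ℕ) (a : Fin (2 * k + 1)) (d : ℕ) (hd : d ≤ 2 * k) :
    ∃ b, cdiff k a b = d := by
  have ha := a.isLt
  by_cases h : a.val + d < 2 * k + 1
  · refine ⟨⟨a.val + d, h⟩, ?_⟩
    simp only [cdiff]; split <;> omega
  · refine ⟨⟨a.val + d - (2 * k + 1), by omega⟩, ?_⟩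
    simp only [cdiff]; split <;> omega

lemma outdeg (k : ℕ) (a : Fin (2 * k + 1)) :
    (Finset.univ.filter (fun b => Rot k a b)).card = k := by
  have : (Finset.univ.filter (fun b => Rot k a b)).card = (Finset.Icc 1 k).card := by
    apply Finset.card_bij (fun b _ => cdiff k a b)
    · intro b hb
      rw [Finset.mem_filter] at hb
      simp only [Finset.mem_filter, Finset.mem_univ, true_and, Rot] at hb
      simp only [Finset.mem_Icc]; exact hb
    · intro b hb c hc h; exact cdiff_inj k a b c h
    · intro d hd
      simp only [Finset.mem_Icc] at hd
      obtain ⟨b, hb⟩ := cdiff_surj k a d (by omega)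
      refine ⟨b, ?_, hb⟩
      rw [Finset.mem_filter]
      simp only [Finset.mem_filter, Finset.mem_univ, true_and, Rot]
      omega
  rw [this, Nat.card_Icc]; omega

lemma indeg (k : ℕ) (a : Fin (2 * k + 1)) :
    (Finset.univ.filter (fun b => Rot k b a)).card = k := by
  have : (Finset.univ.filter (fun b => Rot k b a)).card = (Finset.Icc (k+1) (2*k)).card := by
    apply Finset.card_bij (fun b _ => cdiff k a b)
    · intro b hb
      rw [Finset.mem_filter] at hb
      simp only [Finset.mem_filter, Finset.mem_univ, true_and, Rot] at hb
      have hne : b ≠ a := by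
        intro h; subst h; exact rot_irrefl k b (by exact ⟨hb.1, hb.2⟩)
      simp only [Finset.mem_Icc]
      have h2 := cdiff_add k a b hne.symm
      omega
    · intro b hb c hc h; exact cdiff_inj k a b c h
    · intro d hd
      simp only [Finset.mem_Icc] at hd
      obtain ⟨b, hb⟩ := cdiff_surj k a d (by omega)
      have hne : a ≠ b := by
        intro h; subst h; rw [cdiff_self] at hb; omega
      have h2 := cdiff_add k a b hne
      refine ⟨b, ?_, hb⟩
      rw [Finset.mem_filter]
      simp only [Finset.mem_filter, Finset.mem_univ, true_and, Rot]
      omega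
  rw [this, Nat.card_Icc]; omega


lemma card_filter_product {α β : Type*} (s : Finset α) (t : Finset β)
    (R : α → β → Prop) [∀ a b, Decidable (R a b)] :
    ((s ×ˢ t).filter fun p => R p.1 p.2).card = ∑ a ∈ s, (t.filter (R a)).card := by
  rw [Finset.card_filter, Finset.sum_product]
  exact Finset.sum_congr rfl fun a _ => by rw [Finset.card_filter]

lemma rot_cross (k : ℕ) (hk : 1 ≤ k) (Y : Finset (Fin (2 * k + 1)))
    (h1 : Y.Nonempty) (h2 : Y ≠ Finset.univ) :
    k ≤ ((Y ×ˢ Yᶜ).filter fun p => Rot k p.1 p.2).card := by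
  classical
  set m := Y.card with hm
  have hm1 : 1 ≤ m := Finset.card_pos.mpr h1
  have hm2 : m ≤ 2 * k := by
    have h := Finset.card_lt_card (Finset.ssubset_univ_iff.mpr h2)
    rw [Finset.card_univ, Fintype.card_fin] at h
    omega
  set C := ((Y ×ˢ Yᶜ).filter fun p => Rot k p.1 p.2).card with hC
  set E := ∑ a ∈ Y, (Y.filter (fun b => Rot k a b)).card with hE
  -- C as a sum
  have hCsum : C = ∑ a ∈ Y, (Yᶜ.filter (fun b => Rot k a b)).card :=
    card_filter_product _ _ _
  -- (i) C + E = k * m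
  have hi : C + E = k * m := by
    rw [hCsum, hE, ← Finset.sum_add_distrib]
    have : ∀ a ∈ Y, (Yᶜ.filter (fun b => Rot k a b)).card
        + (Y.filter (fun b => Rot k a b)).card = k := by
      intro a _
      have huniv : Yᶜ ∪ Y = Finset.univ := by ext b; simp; tauto
      have hsplit : (Finset.univ.filter (fun b => Rot k a b)).card
          = (Yᶜ.filter (fun b => Rot k a b)).card + (Y.filter (fun b => Rot k a b)).card := by
        rw [← Finset.card_union_of_disjoint
          (Finset.disjoint_filter_filter disjoint_compl_left), ← Finset.filter_union, huniv]
      rw [outdeg] at hsplit; omega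
    rw [Finset.sum_congr rfl this, Finset.sum_const, smul_eq_mul, hm]
    ring
  -- (ii) 2E + m = m * m
  have hii : 2 * E + m = m * m := by
    have hEdouble : E = ∑ a ∈ Y, ∑ b ∈ Y, (if Rot k a b then 1 else 0) := by
      rw [hE]; exact Finset.sum_congr rfl fun a _ => Finset.card_filter _ _
    have hErev : E = ∑ a ∈ Y, ∑ b ∈ Y, (if Rot k b a then 1 else 0) := by
      rw [hEdouble, Finset.sum_comm]
    have : 2 * E = ∑ a ∈ Y, ∑ b ∈ Y,
        ((if Rot k a b then 1 else 0) + (if Rot k b a then 1 else 0)) := by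
      rw [two_mul]; nth_rewrite 1 [hEdouble]; rw [hErev, ← Finset.sum_add_distrib]
      exact Finset.sum_congr rfl fun a _ => (Finset.sum_add_distrib).symm
    have hpt : ∀ a ∈ Y, ∀ b ∈ Y,
        ((if Rot k a b then 1 else 0) + (if Rot k b a then 1 else 0))
          = (if a = b then 0 else 1) := by
      intro a _ b _
      by_cases hab : a = b
      · subst hab; simp [rot_irrefl k a]
      · rcases rot_total k a b hab with ⟨h1', h2'⟩ | ⟨h1', h2'⟩ <;> simp [h1', h2', hab]
    have hinner : ∀ a ∈ Y, (∑ b ∈ Y, (if a = b then (0:ℕ) else 1)) + 1 = m := by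
      intro a ha
      have : (∑ b ∈ Y, (if a = b then (0:ℕ) else 1)) + ∑ b ∈ Y, (if a = b then (1:ℕ) else 0)
          = ∑ b ∈ Y, 1 := by
        rw [← Finset.sum_add_distrib]
        exact Finset.sum_congr rfl fun b _ => by by_cases h : a = b <;> simp [h]
      have h2' : ∑ b ∈ Y, (if a = b then (1:ℕ) else 0) = 1 := by
        rw [Finset.sum_ite_eq]; simp [ha]
      simp only [Finset.sum_const, smul_eq_mul, mul_one] at this
      omega
    have h2E : 2 * E = ∑ a ∈ Y, (m - 1) := by
      rw [this, Finset.sum_congr rfl (fun a ha => Finset.sum_congr rfl (hpt a ha))]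
      refine Finset.sum_congr rfl fun a ha => ?_
      have := hinner a ha; omega
    rw [h2E, Finset.sum_const, smul_eq_mul, hm]
    have : m - 1 + 1 = m := by omega
    nlinarith [this]
  -- conclude
  obtain ⟨m', hm'⟩ : ∃ m', m = m' + 1 := ⟨m - 1, by omega⟩
  obtain ⟨t, ht⟩ : ∃ t, 2 * k = (m' + 1) + t := ⟨2 * k - (m' + 1), by omega⟩
  have key : 2 * C + m * m = 2 * (k * m) + m := by linarith
  rw [hm'] at key
  have ht' : 2 * k * m' = (m' + 1 + t) * m' := by rw [ht]
  nlinarith [key, ht', Nat.zero_le (t * m')]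


/-- the digraph: `r` copies of the rotative tournament, plus a complete digraph
on the zero vertices of the copies. -/
def Dp (k r : ℕ) (u v : Fin (2 * k + 1) × Fin r) : Prop :=
  (u.2 = v.2 ∧ Rot k u.1 v.1) ∨ (u.1 = 0 ∧ v.1 = 0 ∧ u.2 ≠ v.2)

lemma Dp_irrefl (k r : ℕ) (v : Fin (2 * k + 1) × Fin r) : ¬ Dp k r v v := by
  rintro (⟨-, h⟩ | ⟨-, -, h⟩)
  · exact rot_irrefl k _ h
  · exact h rfl

/-- a Finset inside a set bounds its ncard from below -/
lemma finset_le_ncard {α : Type*} [Finite α] (F : Finset α) (S : Set α)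
    (h : ∀ x ∈ F, x ∈ S) : F.card ≤ S.ncard := by
  rw [← Set.ncard_coe_finset]
  exact Set.ncard_le_ncard h (Set.toFinite S)

lemma ncard_setOf_eq_filter {α : Type*} [Fintype α] (p : α → Prop) [DecidablePred p] :
    {a | p a}.ncard = (Finset.univ.filter p).card := by
  rw [← Set.ncard_coe_finset]
  congr 1
  ext a; simp

lemma Dp_conn (k r : ℕ) (hk : 1 ≤ k) (hr : k + 1 ≤ r) : IsKArcConnected (Dp k r) k := by
  classical
  intro X hne hproper
  by_cases hcase : ∃ i : Fin r, (∃ j, (j, i) ∈ X) ∧ (∃ j, (j, i) ∉ X)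
  · -- some column meets X properly: use the tournament crossing bound
    obtain ⟨i, ⟨j1, hj1⟩, ⟨j2, hj2⟩⟩ := hcase
    set Y : Finset (Fin (2 * k + 1)) := Finset.univ.filter (fun j => (j, i) ∈ X) with hY
    have hY1 : Y.Nonempty := ⟨j1, by simp [hY, hj1]⟩
    have hY2 : Y ≠ Finset.univ := by
      intro h
      have : j2 ∈ Y := h ▸ Finset.mem_univ j2
      simp [hY] at this
      exact hj2 this
    have hcross := rot_cross k hk Y hY1 hY2
    refine le_trans hcross ?_
    have hinj : Function.Injective
        (fun p : Fin (2 * k + 1) × Fin (2 * k + 1) => (((p.1, i), (p.2, i)) :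
          (Fin (2 * k + 1) × Fin r) × (Fin (2 * k + 1) × Fin r))) := by
      intro p q h
      simp only [Prod.mk.injEq] at h
      exact Prod.ext h.1.1 h.2.1
    rw [← Finset.card_image_of_injective
      (((Y ×ˢ Yᶜ).filter fun p => Rot k p.1 p.2)) hinj]
    apply finset_le_ncard
    intro x hx
    simp only [Finset.mem_image, Finset.mem_filter, Finset.mem_product, Finset.mem_compl] at hx
    obtain ⟨p, ⟨⟨hp1, hp2⟩, hrot⟩, rfl⟩ := hx
    simp only [hY, Finset.mem_filter, Finset.mem_univ, true_and] at hp1 hp2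
    exact ⟨Or.inl ⟨rfl, hrot⟩, hp1, hp2⟩
  · -- every column is entirely inside or outside X
    push_neg at hcase
    set A : Finset (Fin r) := Finset.univ.filter (fun i => ((0 : Fin (2 * k + 1)), i) ∈ X) with hA
    have hcol : ∀ i : Fin r, (∀ j, (j, i) ∈ X) ∨ (∀ j, (j, i) ∉ X) := by
      intro i
      by_cases h : ∃ j, (j, i) ∈ X
      · exact Or.inl (hcase i h)
      · push_neg at h; exact Or.inr h
    have hAmem : ∀ i j, i ∈ A → (j, i) ∈ X := by
      intro i j hi
      simp only [hA, Finset.mem_filter, Finset.mem_univ, true_and] at hi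
      rcases hcol i with h | h
      · exact h j
      · exact absurd hi (h 0)
    have hAnotmem : ∀ i j, i ∉ A → (j, i) ∉ X := by
      intro i j hi
      simp only [hA, Finset.mem_filter, Finset.mem_univ, true_and] at hi
      rcases hcol i with h | h
      · exact absurd (h 0) hi
      · exact h j
    have hA1 : A.Nonempty := by
      obtain ⟨⟨j, i⟩, hv⟩ := hne
      refine ⟨i, ?_⟩
      by_contra h
      exact hAnotmem i j h hv
    have hA2 : Aᶜ.Nonempty := by
      obtain ⟨⟨j, i⟩, hv⟩ := (Set.ne_univ_iff_exists_notMem X).mp hproper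
      refine ⟨i, Finset.mem_compl.mpr ?_⟩
      intro h
      exact hv (hAmem i j h)
    have hcard : k ≤ A.card * Aᶜ.card := by
      have h1 : 1 ≤ A.card := Finset.card_pos.mpr hA1
      have h2 : 1 ≤ Aᶜ.card := Finset.card_pos.mpr hA2
      have h3 : A.card + Aᶜ.card = r := by
        rw [Finset.card_add_card_compl, Fintype.card_fin]
      obtain ⟨a, ha⟩ : ∃ a, A.card = a + 1 := ⟨A.card - 1, by omega⟩
      obtain ⟨b, hb⟩ : ∃ b, Aᶜ.card = b + 1 := ⟨Aᶜ.card - 1, by omega⟩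
      rw [ha, hb]
      nlinarith [Nat.zero_le (a * b)]
    refine le_trans hcard ?_
    have hinj : Function.Injective (fun p : Fin r × Fin r =>
        ((((0 : Fin (2 * k + 1)), p.1), ((0 : Fin (2 * k + 1)), p.2)) :
          (Fin (2 * k + 1) × Fin r) × (Fin (2 * k + 1) × Fin r))) := by
      intro p q h
      simp only [Prod.mk.injEq] at h
      exact Prod.ext h.1.2 h.2.2
    rw [← Finset.card_product]
    rw [← Finset.card_image_of_injective (A ×ˢ Aᶜ) hinj]
    apply finset_le_ncard
    intro x hx
    simp only [Finset.mem_image, Finset.mem_product, Finset.mem_compl] at hx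
    obtain ⟨p, ⟨hp1, hp2⟩, rfl⟩ := hx
    refine ⟨Or.inr ⟨rfl, rfl, ?_⟩, hAmem _ _ hp1, hAnotmem _ _ hp2⟩
    intro h
    have h' : p.1 = p.2 := h
    exact hp2 (h' ▸ hp1)


lemma transport {V W : Type*} [Finite V] (φ : V ≃ W) {D : V → V → Prop} {k : ℕ}
    (hD : IsKArcConnected D k) :
    IsKArcConnected (fun x y => D (φ.symm x) (φ.symm y)) k := by
  intro X hne hprop
  have h1 : (φ.symm '' X).Nonempty := hne.image _
  have h2 : φ.symm '' X ≠ Set.univ := by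
    intro h
    apply hprop
    rw [Set.eq_univ_iff_forall]
    intro x
    have : φ.symm x ∈ φ.symm '' X := h ▸ Set.mem_univ _
    obtain ⟨y, hy, hxy⟩ := this
    rwa [φ.symm.injective hxy] at hy
  have hbound := hD (φ.symm '' X) h1 h2
  refine le_trans hbound ?_
  have hinj : Function.Injective (fun p : V × V => (φ p.1, φ p.2)) := by
    intro p q h
    simp only [Prod.mk.injEq] at h
    exact Prod.ext (φ.injective h.1) (φ.injective h.2)
  have himg : {p : W × W | (fun x y => D (φ.symm x) (φ.symm y)) p.1 p.2 ∧ p.1 ∈ X ∧ p.2 ∉ X}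
      = (fun p : V × V => (φ p.1, φ p.2)) ''
        {p : V × V | D p.1 p.2 ∧ p.1 ∈ φ.symm '' X ∧ p.2 ∉ φ.symm '' X} := by
    ext p
    simp only [Set.mem_setOf_eq, Set.mem_image, Prod.exists]
    constructor
    · rintro ⟨hD', hp1, hp2⟩
      refine ⟨φ.symm p.1, φ.symm p.2, ⟨hD', ⟨p.1, hp1, rfl⟩, ?_⟩, by simp⟩
      rintro ⟨y, hy, hxy⟩
      exact hp2 (by rwa [φ.symm.injective hxy] at hy)
    · rintro ⟨a, b, ⟨hD', ⟨a', ha', haa⟩, hb⟩, rfl⟩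
      refine ⟨by simpa using hD', ?_, ?_⟩
      · rw [← haa, Equiv.apply_symm_apply]
        exact ha'
      · intro hmem
        exact hb ⟨φ b, hmem, by simp⟩
  rw [himg, Set.ncard_image_of_injective _ hinj]

lemma force_in {V : Type*} [Finite V] {D H : V → V → Prop} {k : ℕ}
    (hsub : ∀ u v, H u v → D u v) (hirr : ∀ v, ¬ D v v)
    (hH : IsKArcConnected H k) (v : V) (hcard : {u | D u v}.ncard ≤ k)
    (hbig : ∃ w : V, w ≠ v) : ∀ u, D u v → H u v := by
  classical
  obtain ⟨w, hw⟩ := hbig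
  have h1 : ({v}ᶜ : Set V).Nonempty := ⟨w, hw⟩
  have h2 : ({v}ᶜ : Set V) ≠ Set.univ :=
    (Set.ne_univ_iff_exists_notMem _).mpr ⟨v, by simp⟩
  have hc := hH _ h1 h2
  have hset : {p : V × V | H p.1 p.2 ∧ p.1 ∈ ({v}ᶜ : Set V) ∧ p.2 ∉ ({v}ᶜ : Set V)}
      = (fun u => (u, v)) '' {u | H u v} := by
    ext p
    simp only [Set.mem_setOf_eq, Set.mem_compl_iff, Set.mem_singleton_iff, not_not,
      Set.mem_image]
    constructor
    · rintro ⟨hp, hp1, hp2⟩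
      exact ⟨p.1, by rwa [hp2] at hp, by rw [← hp2]⟩
    · rintro ⟨u, hu, rfl⟩
      exact ⟨hu, fun h => hirr v (hsub _ _ (h ▸ hu)), rfl⟩
  rw [hset, Set.ncard_image_of_injective _ (fun a b h => (Prod.mk.injEq _ _ _ _ ▸ h : _ ∧ _).1)] at hc
  have hsub2 : {u | H u v} ⊆ {u | D u v} := fun u hu => hsub u v hu
  have heq := Set.eq_of_subset_of_ncard_le hsub2 (le_trans hcard hc) (Set.toFinite _)
  intro u hu
  have : u ∈ {u | D u v} := hu
  rw [← heq] at this
  exact this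

lemma force_out {V : Type*} [Finite V] {D H : V → V → Prop} {k : ℕ}
    (hsub : ∀ u v, H u v → D u v) (hirr : ∀ v, ¬ D v v)
    (hH : IsKArcConnected H k) (v : V) (hcard : {u | D v u}.ncard ≤ k)
    (hbig : ∃ w : V, w ≠ v) : ∀ u, D v u → H v u := by
  classical
  have h1 : ({v} : Set V).Nonempty := ⟨v, rfl⟩
  have h2 : ({v} : Set V) ≠ Set.univ := by
    obtain ⟨w, hw⟩ := hbig
    exact (Set.ne_univ_iff_exists_notMem _).mpr ⟨w, by simpa using hw⟩
  have hc := hH _ h1 h2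
  have hset : {p : V × V | H p.1 p.2 ∧ p.1 ∈ ({v} : Set V) ∧ p.2 ∉ ({v} : Set V)}
      = (fun u => (v, u)) '' {u | H v u} := by
    ext p
    simp only [Set.mem_setOf_eq, Set.mem_singleton_iff, Set.mem_image]
    constructor
    · rintro ⟨hp, hp1, hp2⟩
      exact ⟨p.2, by rwa [hp1] at hp, by rw [← hp1]⟩
    · rintro ⟨u, hu, rfl⟩
      exact ⟨hu, rfl, fun h => hirr v (hsub _ _ (h ▸ hu))⟩
  rw [hset, Set.ncard_image_of_injective _ (fun a b h => (Prod.mk.injEq _ _ _ _ ▸ h : _ ∧ _).2)] at hc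
  have hsub2 : {u | H v u} ⊆ {u | D v u} := fun u hu => hsub v u hu
  have heq := Set.eq_of_subset_of_ncard_le hsub2 (le_trans hcard hc) (Set.toFinite _)
  intro u hu
  have : u ∈ {u | D v u} := hu
  rw [← heq] at this
  exact this

lemma indeg_Dp (k r : ℕ) (b : Fin (2 * k + 1)) (i : Fin r) (hb : b ≠ 0) :
    {u | Dp k r u (b, i)}.ncard = k := by
  classical
  have hset : {u | Dp k r u (b, i)} = (fun a => (a, i)) '' {a | Rot k a b} := by
    ext u
    simp only [Set.mem_setOf_eq, Set.mem_image, Dp]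
    constructor
    · rintro (⟨h1, h2⟩ | ⟨-, h2, -⟩)
      · exact ⟨u.1, h2, Prod.ext rfl h1.symm⟩
      · exact absurd h2 hb
    · rintro ⟨a, ha, rfl⟩
      exact Or.inl ⟨rfl, ha⟩
  rw [hset, Set.ncard_image_of_injective _ (fun a a' h => (Prod.mk.injEq _ _ _ _ ▸ h : _ ∧ _).1),
    ncard_setOf_eq_filter, indeg]

lemma outdeg_Dp (k r : ℕ) (a : Fin (2 * k + 1)) (i : Fin r) (ha : a ≠ 0) :
    {w | Dp k r (a, i) w}.ncard = k := by
  classical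
  have hset : {w | Dp k r (a, i) w} = (fun b => (b, i)) '' {b | Rot k a b} := by
    ext w
    simp only [Set.mem_setOf_eq, Set.mem_image, Dp]
    constructor
    · rintro (⟨h1, h2⟩ | ⟨h2, -, -⟩)
      · exact ⟨w.1, h2, Prod.ext rfl h1⟩
      · exact absurd h2 ha
    · rintro ⟨b, hbm, rfl⟩
      exact Or.inl ⟨rfl, hbm⟩
  rw [hset, Set.ncard_image_of_injective _ (fun x y h => (Prod.mk.injEq _ _ _ _ ▸ h : _ ∧ _).1),
    ncard_setOf_eq_filter, outdeg]

end Stmt16Aux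

/-- For all `k ≥ 1` and `r ≥ k+1` there is a `k`-arc-connected digraph on
`(2k+1)·r` vertices each of whose spanning `k`-arc-connected subdigraphs has
chromatic number at least `2k+1`. -/
theorem stmt16 (k r : ℕ) (hk : 1 ≤ k) (hr : k + 1 ≤ r) :
    ∃ D : Fin ((2 * k + 1) * r) → Fin ((2 * k + 1) * r) → Prop,
      (∀ v, ¬ D v v) ∧ IsKArcConnected D k ∧
      ∀ H : Fin ((2 * k + 1) * r) → Fin ((2 * k + 1) * r) → Prop,
        (∀ u v, H u v → D u v) → IsKArcConnected H k →
        ¬ ∃ P : Fin ((2 * k + 1) * r) → Fin (2 * k), ∀ u v, H u v → P u ≠ P v := by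
  classical
  have hrpos : 0 < r := by omega
  let e : Fin (2 * k + 1) × Fin r ≃ Fin ((2 * k + 1) * r) := finProdFinEquiv
  refine ⟨fun x y => Stmt16Aux.Dp k r (e.symm x) (e.symm y),
    fun v => Stmt16Aux.Dp_irrefl k r _,
    Stmt16Aux.transport e (Stmt16Aux.Dp_conn k r hk hr), ?_⟩
  intro H hsub hH hex
  obtain ⟨P, hP⟩ := hex
  let H' : Fin (2 * k + 1) × Fin r → Fin (2 * k + 1) × Fin r → Prop :=
    fun u v => H (e u) (e v)
  have hsub' : ∀ u v, H' u v → Stmt16Aux.Dp k r u v := by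
    intro u v h
    have := hsub _ _ h
    simpa [e] using this
  have hH'conn : IsKArcConnected H' k := by
    have := Stmt16Aux.transport e.symm hH
    simpa [H'] using this
  have h10 : (1 : Fin (2 * k + 1)) ≠ 0 := by
    intro h
    have h1 : ((1 : Fin (2 * k + 1)) : ℕ) = ((0 : Fin (2 * k + 1)) : ℕ) := congrArg Fin.val h
    rw [Fin.val_one', Fin.val_zero, Nat.mod_eq_of_lt (by omega)] at h1
    omega
  have hbig : ∀ v : Fin (2 * k + 1) × Fin r, ∃ w, w ≠ v := by
    intro v
    refine ⟨(v.1 + 1, v.2), fun h => ?_⟩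
    have h1 : v.1 + 1 = v.1 := congrArg Prod.fst h
    exact h10 (add_eq_left.mp h1)
  have hirr : ∀ v, ¬ Stmt16Aux.Dp k r v v := Stmt16Aux.Dp_irrefl k r
  have hforce : ∀ (a b : Fin (2 * k + 1)) (i : Fin r),
      Stmt16Aux.Rot k a b → H' (a, i) (b, i) := by
    intro a b i hrot
    have hab : a ≠ b := fun h => Stmt16Aux.rot_irrefl k a (h ▸ hrot)
    by_cases hb : b = 0
    · have ha : a ≠ 0 := fun h => hab (h.trans hb.symm)
      exact Stmt16Aux.force_out hsub' hirr hH'conn (a, i)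
        (le_of_eq (Stmt16Aux.outdeg_Dp k r a i ha)) (hbig _) _ (Or.inl ⟨rfl, hrot⟩)
    · exact Stmt16Aux.force_in hsub' hirr hH'conn (b, i)
        (le_of_eq (Stmt16Aux.indeg_Dp k r b i hb)) (hbig _) _ (Or.inl ⟨rfl, hrot⟩)
  let i0 : Fin r := ⟨0, hrpos⟩
  have hQinj : Function.Injective (fun j : Fin (2 * k + 1) => P (e (j, i0))) := by
    intro j j' h
    by_contra hne
    rcases Stmt16Aux.rot_total k j j' hne with ⟨h1, -⟩ | ⟨h1, -⟩
    · exact hP _ _ (hforce j j' i0 h1) h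
    · exact hP _ _ (hforce j' j i0 h1) h.symm
  have hcard := Fintype.card_le_of_injective _ hQinj
  rw [Fintype.card_fin, Fintype.card_fin] at hcard
  omega
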